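/- arXiv:2504.19492 — 2 statements merged into one kernel-verified Lean document; each statement's English description precedes it below -/
import Mathlib

section
/- Conjugation of elementary symplectic generators by δ_I: for I ∈ 𝕄^{(n)}, c ∈ C, and admissible indices i ≠ j, one has δ_I se_{ij}(c) δ_I^{-1} = se_{ij}(t·c) if i ∈ I and σ(j) ∈ I; δ_I se_{ij}(c) δ_I^{-1} = se_{ij}(t^{-1}·c) if σ(i) ∈ I and j ∈ I; and δ_I se_{ij}(c) δ_I^{-1} = se_{ij}(c) otherwise. -/
namespace SympMonoid

/-- The permutation σ = (1,2)(3,4)⋯(2n-1,2n), in 0-based indexing on `Fin (2*n)`. -/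
def sgm (n : ℕ) (i : Fin (2 * n)) : Fin (2 * n) :=
  if _h : i.val % 2 = 0 then ⟨i.val + 1, by have := i.isLt; omega⟩
  else ⟨i.val - 1, by have := i.isLt; omega⟩

/-- The standard alternating form matrix ψₙ = diag(ψ₁,…,ψ₁) with ψ₁ = [[0,1],[-1,0]]. -/
def Psi (R : Type*) [CommRing R] (n : ℕ) : Matrix (Fin (2 * n)) (Fin (2 * n)) R :=
  Matrix.of fun i j =>
    if i.val % 2 = 0 ∧ j.val = i.val + 1 then (1 : R)
    else if i.val % 2 = 1 ∧ j.val + 1 = i.val then (-1 : R) else 0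

/-- The elementary symplectic matrix se_{ij}(λ) = Id + λ e_{ij} − (−1)^{i+j} λ e_{σ(j)σ(i)}. -/
def se (R : Type*) [CommRing R] (n : ℕ) (i j : Fin (2 * n)) (lam : R) :
    Matrix (Fin (2 * n)) (Fin (2 * n)) R :=
  1 + Matrix.single i j lam
    - Matrix.single (sgm n j) (sgm n i) ((-1 : R) ^ (i.val + j.val) * lam)

end SympMonoid

open SympMonoid Matrix

theorem sgm_val' (n : ℕ) (i : Fin (2 * n)) :
    (sgm n i).val = if i.val % 2 = 0 then i.val + 1 else i.val - 1 := by
  unfold sgm; split_ifs <;> rfl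

theorem sgm_sgm' (n : ℕ) (i : Fin (2 * n)) : sgm n (sgm n i) = i := by
  apply Fin.val_injective
  rw [sgm_val', sgm_val']
  split_ifs <;> omega

theorem sgm_inj' (n : ℕ) {a b : Fin (2 * n)} (h : sgm n a = sgm n b) : a = b := by
  rw [← sgm_sgm' n a, h, sgm_sgm']

theorem conj_aux {C : Type*} [CommRing C] (n : ℕ) (f g : Fin (2 * n) → C)
    (hfg : ∀ k, f k * g k = 1) (i j : Fin (2 * n)) (hij : i ≠ j) (hadm : sgm n i ≠ j)
    (c s : C) (h1 : f i * g j = s) (h2 : f (sgm n j) * g (sgm n i) = s) :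
    Matrix.diagonal f * se C n i j c * Matrix.diagonal g = se C n i j (s * c) := by
  ext a b
  rw [Matrix.mul_diagonal, Matrix.diagonal_mul]
  simp only [se, Matrix.add_apply, Matrix.sub_apply, Matrix.one_apply,
    Matrix.single, Matrix.of_apply]
  by_cases hab : a = b
  · have h3 : ¬(i = a ∧ j = b) := fun ⟨hi, hj⟩ => hij (by rw [hi, hj, hab])
    have h4 : ¬(sgm n j = a ∧ sgm n i = b) := fun ⟨hi, hj⟩ =>
      hij (sgm_inj' n (show sgm n i = sgm n j by rw [hi, hj, hab]))
    simp only [if_pos hab, if_neg h3, if_neg h4]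
    have := hfg a
    subst hab
    ring_nf
    linear_combination this
  · simp only [if_neg hab]
    by_cases h5 : i = a ∧ j = b
    · have h6 : ¬(sgm n j = a ∧ sgm n i = b) := fun ⟨_, hx⟩ => hadm (by rw [hx, h5.2])
      simp only [if_pos h5, if_neg h6]
      rw [← h5.1, ← h5.2]
      linear_combination c * h1
    · simp only [if_neg h5]
      by_cases h7 : sgm n j = a ∧ sgm n i = b
      · simp only [if_pos h7]
        rw [← h7.1, ← h7.2]
        linear_combination (-(-1 : C) ^ (i.val + j.val) * c) * h2
      · simp only [if_neg h7]
        ring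

/-- Conjugation of the elementary symplectic generators by δ_I. -/
theorem delta_conj_se (C : Type*) [CommRing C] (n : ℕ) (u : Cˣ) (c : C)
    (I : Finset (Fin (2 * n))) (hI : ∀ i, i ∈ I ↔ sgm n i ∉ I)
    (i j : Fin (2 * n)) (hij : i ≠ j) (hadm : sgm n i ≠ j) :
    (i ∈ I → sgm n j ∈ I →
      (Matrix.diagonal fun k => if k ∈ I then (u : C) else 1) * se C n i j c *
        (Matrix.diagonal fun k => if k ∈ I then (u : C) else 1)⁻¹ =
          se C n i j ((u : C) * c)) ∧
    (sgm n i ∈ I → j ∈ I →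
      (Matrix.diagonal fun k => if k ∈ I then (u : C) else 1) * se C n i j c *
        (Matrix.diagonal fun k => if k ∈ I then (u : C) else 1)⁻¹ =
          se C n i j (((u⁻¹ : Cˣ) : C) * c)) ∧
    (¬(i ∈ I ∧ sgm n j ∈ I) → ¬(sgm n i ∈ I ∧ j ∈ I) →
      (Matrix.diagonal fun k => if k ∈ I then (u : C) else 1) * se C n i j c *
        (Matrix.diagonal fun k => if k ∈ I then (u : C) else 1)⁻¹ = se C n i j c) := by
  classical
  have hsI : ∀ k, sgm n k ∈ I ↔ k ∉ I := fun k => by rw [hI (sgm n k), sgm_sgm']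
  set f : Fin (2 * n) → C := fun k => if k ∈ I then (u : C) else 1 with hf
  set g : Fin (2 * n) → C := fun k => if k ∈ I then ((u⁻¹ : Cˣ) : C) else 1 with hg
  have hfg : ∀ k, f k * g k = 1 := by
    intro k; by_cases h : k ∈ I <;> simp [hf, hg, h]
  have hDinv : (Matrix.diagonal f)⁻¹ = Matrix.diagonal g := by
    apply Matrix.inv_eq_right_inv
    rw [Matrix.diagonal_mul_diagonal]
    ext a b
    by_cases h : a = b <;> simp [Matrix.diagonal_apply, Matrix.one_apply, h, hfg]
  refine ⟨?_, ?_, ?_⟩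
  · intro h1 h2
    have hj : j ∉ I := fun hj => (hI j).mp hj h2
    have hsi : sgm n i ∉ I := fun h => (hsI i).mp h h1
    rw [hDinv]
    exact conj_aux n f g hfg i j hij hadm c (u : C)
      (by simp [hf, hg, h1, hj]) (by simp [hf, hg, h2, hsi])
  · intro h1 h2
    have hi : i ∉ I := (hsI i).mp h1
    have hsj : sgm n j ∉ I := (hI j).mp h2
    rw [hDinv]
    exact conj_aux n f g hfg i j hij hadm c ((u⁻¹ : Cˣ) : C)
      (by simp [hf, hg, hi, h2]) (by simp [hf, hg, h1, hsj])
  · intro hA hB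
    have hiff : i ∈ I ↔ j ∈ I := by
      constructor
      · intro hi; by_contra hj; exact hA ⟨hi, (hsI j).mpr hj⟩
      · intro hj; by_contra hi; exact hB ⟨(hsI i).mpr hi, hj⟩
    rw [hDinv]
    have e1 : f i * g j = 1 := by
      by_cases hi : i ∈ I
      · have hj := hiff.mp hi
        simp [hf, hg, hi, hj]
      · have hj : j ∉ I := fun h => hi (hiff.mpr h)
        simp [hf, hg, hi, hj]
    have e2 : f (sgm n j) * g (sgm n i) = 1 := by
      by_cases hi : i ∈ I
      · have : sgm n j ∉ I := (hsI j).not.mpr (by simp [hiff.mp hi])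
        have h2 : sgm n i ∉ I := fun h => (hsI i).mp h hi
        simp [hf, hg, this, h2]
      · have : sgm n j ∈ I := (hsI j).mpr fun h => hi (hiff.mpr h)
        have h2 : sgm n i ∈ I := (hsI i).mpr hi
        simp [hf, hg, this, h2]
    have := conj_aux n f g hfg i j hij hadm c 1 e1 e2
    rwa [one_mul] at this
end

section
/- Let v, w ∈ R^{2n} with ṽ = v^T ψ_n and w̃ = w^T ψ_n. If f ∈ R and w̃ · v = 0 (equivalently ṽ · w = 0), then Id_{2n} + f(v w̃ + w ṽ) lies in Sp_{2n}(R). -/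
open SympMonoid Matrix

section Aux

set_option linter.unusedSectionVars false

variable (R : Type*) [CommRing R] (n : ℕ)

lemma aux_sgm_val (j : Fin (2 * n)) :
    (sgm n j).val = if j.val % 2 = 0 then j.val + 1 else j.val - 1 := by
  unfold sgm; split_ifs <;> rfl

lemma aux_sgm_sgm (j : Fin (2 * n)) : sgm n (sgm n j) = j := by
  apply Fin.ext
  rw [aux_sgm_val, aux_sgm_val]
  have := j.isLt
  split_ifs <;> omega

lemma aux_sgm_ne (j : Fin (2 * n)) : sgm n j ≠ j := by
  intro h
  have := congrArg Fin.val h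
  rw [aux_sgm_val] at this
  split_ifs at this <;> omega

lemma aux_Psi_apply (i j : Fin (2 * n)) :
    Psi R n i j = if i.val % 2 = 0 ∧ j.val = i.val + 1 then (1 : R)
      else if i.val % 2 = 1 ∧ j.val + 1 = i.val then (-1 : R) else 0 := rfl

lemma aux_Psi_eq_zero {i j : Fin (2 * n)} (h : i ≠ sgm n j) : Psi R n i j = 0 := by
  have hv : i.val ≠ (sgm n j).val := fun e => h (Fin.ext e)
  rw [aux_sgm_val] at hv
  rw [aux_Psi_apply]
  split_ifs with h1 h2
  · exfalso; split_ifs at hv <;> omega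
  · exfalso; split_ifs at hv <;> omega
  · rfl

lemma aux_Psi_sgm (j : Fin (2 * n)) :
    Psi R n (sgm n j) j = if j.val % 2 = 1 then (1 : R) else -1 := by
  rw [aux_Psi_apply]
  have hs := aux_sgm_val n j
  have := j.isLt
  split_ifs at hs ⊢ <;> first | rfl | (exfalso; omega)

lemma aux_vecMul_Psi (u : Fin (2 * n) → R) (j : Fin (2 * n)) :
    vecMul u (Psi R n) j = if j.val % 2 = 1 then u (sgm n j) else -u (sgm n j) := by
  have : vecMul u (Psi R n) j = ∑ i, u i * Psi R n i j := rfl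
  rw [this, Finset.sum_eq_single (sgm n j)]
  · rw [aux_Psi_sgm]; split_ifs <;> ring
  · intro i _ hi
    rw [aux_Psi_eq_zero R n hi, mul_zero]
  · intro h; exact absurd (Finset.mem_univ _) h

lemma aux_Psi_mulVec (u : Fin (2 * n) → R) :
    (Psi R n).mulVec u = -vecMul u (Psi R n) := by
  funext j
  have : (Psi R n).mulVec u j = ∑ i, Psi R n j i * u i := rfl
  rw [this, Finset.sum_eq_single (sgm n j)]
  · have h1 : Psi R n j (sgm n j) = if j.val % 2 = 0 then (1 : R) else -1 := by
      rw [aux_Psi_apply]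
      have hs := aux_sgm_val n j
      have := j.isLt
      split_ifs at hs ⊢ <;> first | rfl | (exfalso; omega)
    rw [h1]
    have h2 := aux_vecMul_Psi R n u j
    simp only [Pi.neg_apply, h2]
    split_ifs <;> first | ring1 | (exfalso; omega)
  · intro i _ hi
    have : j ≠ sgm n i := by
      intro e; apply hi; rw [e, aux_sgm_sgm]
    rw [aux_Psi_eq_zero R n this, zero_mul]
  · intro h; exact absurd (Finset.mem_univ _) h

lemma aux_dot_self (u : Fin (2 * n) → R) : vecMul u (Psi R n) ⬝ᵥ u = 0 := by
  rw [dotProduct]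
  apply Finset.sum_ninvolution (sgm n)
  · intro j
    rw [aux_vecMul_Psi, aux_vecMul_Psi, aux_sgm_sgm]
    have hs := aux_sgm_val n j
    have := j.isLt
    split_ifs at hs ⊢ <;> first | ring1 | (exfalso; omega)
  · intro j _
    exact aux_sgm_ne n j
  · intro j; exact Finset.mem_univ _
  · exact aux_sgm_sgm n

lemma aux_dot_antisymm (u x : Fin (2 * n) → R) :
    vecMul u (Psi R n) ⬝ᵥ x = -(vecMul x (Psi R n) ⬝ᵥ u) := by
  rw [dotProduct, dotProduct, ← Finset.sum_neg_distrib]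
  apply Fintype.sum_equiv ⟨sgm n, sgm n, aux_sgm_sgm n, aux_sgm_sgm n⟩
  intro j
  simp only [Equiv.coe_fn_mk]
  rw [aux_vecMul_Psi, aux_vecMul_Psi, aux_sgm_sgm]
  have hs := aux_sgm_val n j
  have := j.isLt
  split_ifs at hs ⊢ <;> first | ring1 | (exfalso; omega)

variable {m p q : Type*} [Fintype m] [Fintype p] [Fintype q]

lemma aux_transpose_vecMulVec (a : m → R) (b : p → R) :
    (vecMulVec a b)ᵀ = vecMulVec b a := by
  ext i j; simp [vecMulVec_apply, transpose_apply, mul_comm]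

lemma aux_vecMulVec_mul (a : m → R) (b : p → R) (C : Matrix p q R) :
    vecMulVec a b * C = vecMulVec a (vecMul b C) := by
  ext i j
  simp only [mul_apply, vecMulVec_apply, vecMul, dotProduct, Finset.mul_sum]
  apply Finset.sum_congr rfl; intro k _; ring

lemma aux_mul_vecMulVec (C : Matrix m p R) (a : p → R) (b : q → R) :
    C * vecMulVec a b = vecMulVec (C.mulVec a) b := by
  ext i j
  simp only [mul_apply, vecMulVec_apply, mulVec, dotProduct, Finset.sum_mul]
  apply Finset.sum_congr rfl; intro k _; ring

lemma aux_vecMulVec_mul_vecMulVec (a : m → R) (b c : p → R) (d : q → R) :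
    vecMulVec a b * vecMulVec c d = (b ⬝ᵥ c) • vecMulVec a d := by
  ext i j
  simp only [mul_apply, vecMulVec_apply, Matrix.smul_apply, smul_eq_mul, dotProduct,
    Finset.sum_mul]
  apply Finset.sum_congr rfl; intro k _; ring

lemma aux_vecMulVec_neg_left (a : m → R) (b : p → R) :
    vecMulVec (-a) b = -vecMulVec a b := by
  ext i j; simp [vecMulVec_apply]

end Aux

/-- If w̃·v = 0 then Id + f(v w̃ + w ṽ) ∈ Sp_{2n}(R), where ũ = uᵀψₙ. -/
theorem symplectic_double_transvection_mem (R : Type*) [CommRing R] (n : ℕ)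
    (v w : Fin (2 * n) → R) (f : R)
    (hvw : Matrix.vecMul w (Psi R n) ⬝ᵥ v = 0) :
    IsUnit (1 + f • (Matrix.vecMulVec v (Matrix.vecMul w (Psi R n)) +
        Matrix.vecMulVec w (Matrix.vecMul v (Psi R n)))) ∧
    (1 + f • (Matrix.vecMulVec v (Matrix.vecMul w (Psi R n)) +
        Matrix.vecMulVec w (Matrix.vecMul v (Psi R n))))ᵀ * Psi R n *
      (1 + f • (Matrix.vecMulVec v (Matrix.vecMul w (Psi R n)) +
        Matrix.vecMulVec w (Matrix.vecMul v (Psi R n)))) = Psi R n := by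
  have hwv : Matrix.vecMul v (Psi R n) ⬝ᵥ w = 0 := by
    rw [aux_dot_antisymm, hvw, neg_zero]
  have hvv := aux_dot_self R n v
  have hww := aux_dot_self R n w
  set tv := Matrix.vecMul v (Psi R n) with htv
  set tw := Matrix.vecMul w (Psi R n) with htw
  set M := Matrix.vecMulVec v tw + Matrix.vecMulVec w tv with hM
  have hM2 : M * M = 0 := by
    rw [hM, add_mul, mul_add, mul_add, aux_vecMulVec_mul_vecMulVec,
      aux_vecMulVec_mul_vecMulVec, aux_vecMulVec_mul_vecMulVec,
      aux_vecMulVec_mul_vecMulVec, hvw, hwv, hvv, hww]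
    simp
  have hMT : Mᵀ * Psi R n = Matrix.vecMulVec tw tv + Matrix.vecMulVec tv tw := by
    rw [hM, transpose_add, aux_transpose_vecMulVec, aux_transpose_vecMulVec, add_mul,
      aux_vecMulVec_mul, aux_vecMulVec_mul, ← htv, ← htw]
  have hPM : Psi R n * M = -(Matrix.vecMulVec tw tv + Matrix.vecMulVec tv tw) := by
    rw [hM, mul_add, aux_mul_vecMulVec, aux_mul_vecMulVec, aux_Psi_mulVec, aux_Psi_mulVec,
      ← htv, ← htw, aux_vecMulVec_neg_left, aux_vecMulVec_neg_left]
    abel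
  have hMTM : Mᵀ * Psi R n * M = 0 := by
    rw [hMT, hM, add_mul, mul_add, mul_add, aux_vecMulVec_mul_vecMulVec,
      aux_vecMulVec_mul_vecMulVec, aux_vecMulVec_mul_vecMulVec,
      aux_vecMulVec_mul_vecMulVec, hvw, hwv, hvv, hww]
    simp
  have hA2 : (f • M) * (f • M) = 0 := by
    rw [Matrix.smul_mul, Matrix.mul_smul, hM2, smul_zero, smul_zero]
  constructor
  · refine ⟨⟨1 + f • M, 1 - f • M, ?_, ?_⟩, rfl⟩
    · rw [mul_sub, mul_one, add_mul, one_mul, hA2, add_zero]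
      abel
    · rw [mul_add, mul_one, sub_mul, one_mul, hA2, sub_zero]
      abel
  · have h3 : (1 + f • M)ᵀ * Psi R n = Psi R n + f • (Mᵀ * Psi R n) := by
      rw [transpose_add, transpose_one, transpose_smul, add_mul, one_mul, Matrix.smul_mul]
    have e1 : Psi R n * (1 + f • M) = Psi R n + f • (Psi R n * M) := by
      rw [mul_add, mul_one, Matrix.mul_smul]
    have e2 : (f • (Mᵀ * Psi R n)) * (1 + f • M) = f • (Mᵀ * Psi R n) := by
      rw [mul_add, mul_one, Matrix.smul_mul, Matrix.mul_smul, hMTM, smul_zero, smul_zero,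
        add_zero]
    rw [h3, add_mul, e1, e2, hPM, hMT, smul_neg]
    abel
end
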